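/- Let r₁, r₂ > 0. In ℝ², let O₁ = (0, r₁), O₂ = (0, −r₂), and define the involutes c₁(θ) = O₁ + r₁(sin θ, −cos θ) − r₁θ·(cos θ, sin θ) of the circle of radius r₁ centered at O₁ and c₂(ψ) = O₂ + r₂(sin ψ, cos ψ) − r₂ψ·(cos ψ, −sin ψ) of the circle of radius r₂ centered at O₂, both circles tangent to the x-axis at the origin. Let Rot_P(α) denote rotation of ℝ² about the point P by angle α. Then for every φ ≥ 0, setting α = (r₁/r₂)φ: (i) Rot_{O₁}(−φ)(c₁(φ)) = (−r₁φ, 0) = Rot_{O₂}(α)(c₂(α)), so the two rotated involutes meet at a common point on the common tangent line (the x-axis) of the two base circles; and (ii) at this common point, the tangent vectors of both rotated involute curves are parallel to (0,1), i.e., perpendicular to the x-axis. Hence as gear 1 rotates clockwise by φ and gear 2 rotates counterclockwise by (r₁/r₂)φ, the involute tooth flanks remain in tangential contact at a point moving along the common tangent line of the base circles. -/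

import Mathlib

/-- The point of the Euclidean plane with coordinates `(x, y)`. -/
noncomputable def V (x y : ℝ) : EuclideanSpace ℝ (Fin 2) := WithLp.toLp 2 ![x, y]

/-- Rotation of the plane about the origin by angle `α`. -/
noncomputable def Rot (α : ℝ) (p : EuclideanSpace ℝ (Fin 2)) :
    EuclideanSpace ℝ (Fin 2) :=
  V (Real.cos α * p 0 - Real.sin α * p 1) (Real.sin α * p 0 + Real.cos α * p 1)

/-- Rotation of the plane about the point `P` by angle `α`. -/
noncomputable def RotP (P : EuclideanSpace ℝ (Fin 2)) (α : ℝ)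
    (x : EuclideanSpace ℝ (Fin 2)) : EuclideanSpace ℝ (Fin 2) :=
  P + Rot α (x - P)

lemma V_decomp (x y : ℝ) : V x y = x • V 1 0 + y • V 0 1 := by
  ext i; fin_cases i <;>
    simp [V, PiLp.add_apply, PiLp.smul_apply, smul_eq_mul]

/-- Meshing involute gear pair: as gear 1 (base circle of radius `r₁`, centered
at `O₁ = (0, r₁)`) rotates clockwise by `φ` and gear 2 (base circle of radius
`r₂`, centered at `O₂ = (0, −r₂)`) rotates counterclockwise by `α = (r₁/r₂)φ`,
the two rotated involute tooth flanks meet at the common point `(−r₁φ, 0)` on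
the common tangent line (the x-axis) of the base circles, and at this point
both rotated involute curves have tangent vector parallel to `(0, 1)`, i.e.
perpendicular to the x-axis. -/
theorem involute_gear_pair_tangential_contact
    (r₁ r₂ : ℝ) (h₁ : 0 < r₁) (h₂ : 0 < r₂)
    (O₁ O₂ : EuclideanSpace ℝ (Fin 2))
    (hO₁ : O₁ = V 0 r₁) (hO₂ : O₂ = V 0 (-r₂))
    (c₁ c₂ : ℝ → EuclideanSpace ℝ (Fin 2))
    (hc₁ : ∀ θ : ℝ, c₁ θ =
      O₁ + r₁ • V (Real.sin θ) (-Real.cos θ)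
         - (r₁ * θ) • V (Real.cos θ) (Real.sin θ))
    (hc₂ : ∀ ψ : ℝ, c₂ ψ =
      O₂ + r₂ • V (Real.sin ψ) (Real.cos ψ)
         - (r₂ * ψ) • V (Real.cos ψ) (-Real.sin ψ)) :
    ∀ φ : ℝ, 0 ≤ φ →
      RotP O₁ (-φ) (c₁ φ) = V (-(r₁ * φ)) 0 ∧
      RotP O₂ ((r₁ / r₂) * φ) (c₂ ((r₁ / r₂) * φ)) = V (-(r₁ * φ)) 0 ∧
      (∃ a : ℝ, deriv (fun θ => RotP O₁ (-φ) (c₁ θ)) φ = a • V 0 1) ∧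
      (∃ b : ℝ, deriv (fun ψ => RotP O₂ ((r₁ / r₂) * φ) (c₂ ψ)) ((r₁ / r₂) * φ) =
        b • V 0 1) := by
  intro φ _
  set α : ℝ := (r₁ / r₂) * φ with hα
  have hr₂α : r₂ * α = r₁ * φ := by
    rw [hα]; field_simp
  -- component formulas for the rotated curves
  set F : ℝ → ℝ := fun θ =>
    Real.cos φ * (r₁ * Real.sin θ - r₁ * θ * Real.cos θ)
      - Real.sin φ * (r₁ * Real.cos θ + r₁ * θ * Real.sin θ) with hF
  set G : ℝ → ℝ := fun θ =>
    r₁ - Real.sin φ * (r₁ * Real.sin θ - r₁ * θ * Real.cos θ)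
      - Real.cos φ * (r₁ * Real.cos θ + r₁ * θ * Real.sin θ) with hG
  have key₁ : ∀ θ : ℝ, RotP O₁ (-φ) (c₁ θ) = V (F θ) (G θ) := by
    intro θ
    ext i; fin_cases i <;>
      · simp only [RotP, Rot, hc₁, hO₁, V, hF, hG, PiLp.add_apply, PiLp.sub_apply,
          PiLp.smul_apply, smul_eq_mul, Real.cos_neg, Real.sin_neg, Fin.isValue, Fin.mk_zero, Fin.mk_one,
          Matrix.cons_val_zero, Matrix.cons_val_one, Matrix.head_cons]
        ring
  set F₂ : ℝ → ℝ := fun ψ =>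
    Real.cos α * (r₂ * Real.sin ψ - r₂ * ψ * Real.cos ψ)
      - Real.sin α * (r₂ * Real.cos ψ + r₂ * ψ * Real.sin ψ) with hF₂
  set G₂ : ℝ → ℝ := fun ψ =>
    -r₂ + Real.sin α * (r₂ * Real.sin ψ - r₂ * ψ * Real.cos ψ)
      + Real.cos α * (r₂ * Real.cos ψ + r₂ * ψ * Real.sin ψ) with hG₂
  have key₂ : ∀ ψ : ℝ, RotP O₂ α (c₂ ψ) = V (F₂ ψ) (G₂ ψ) := by
    intro ψ
    ext i; fin_cases i <;>
      · simp only [RotP, Rot, hc₂, hO₂, V, hF₂, hG₂, PiLp.add_apply, PiLp.sub_apply,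
          PiLp.smul_apply, smul_eq_mul, Fin.isValue, Fin.mk_zero, Fin.mk_one,
          Matrix.cons_val_zero, Matrix.cons_val_one, Matrix.head_cons]
        ring
  have pyth := Real.sin_sq_add_cos_sq φ
  have pyth₂ := Real.sin_sq_add_cos_sq α
  refine ⟨?_, ?_, ?_, ?_⟩
  · rw [key₁ φ]
    have hFv : F φ = -(r₁ * φ) := by simp only [hF]; linear_combination (-(r₁ * φ)) * pyth
    have hGv : G φ = 0 := by simp only [hG]; linear_combination (-r₁) * pyth
    rw [hFv, hGv]
  · rw [key₂ α]
    have hFv : F₂ α = -(r₁ * φ) := by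
      simp only [hF₂]; linear_combination (-(r₂ * α)) * pyth₂ - hr₂α
    have hGv : G₂ α = 0 := by simp only [hG₂]; linear_combination r₂ * pyth₂
    rw [hFv, hGv]
  · -- derivative of gear 1 curve
    have hX : HasDerivAt (fun θ : ℝ => r₁ * Real.sin θ - r₁ * θ * Real.cos θ)
        (r₁ * φ * Real.sin φ) φ := by
      have h := ((Real.hasDerivAt_sin φ).const_mul r₁).sub
        ((((hasDerivAt_id' (𝕜 := ℝ) (x := φ)).const_mul r₁)).mul (Real.hasDerivAt_cos φ))
      exact h.congr_deriv (by ring)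
    have hY : HasDerivAt (fun θ : ℝ => r₁ * Real.cos θ + r₁ * θ * Real.sin θ)
        (r₁ * φ * Real.cos φ) φ := by
      have h := ((Real.hasDerivAt_cos φ).const_mul r₁).add
        ((((hasDerivAt_id' (𝕜 := ℝ) (x := φ)).const_mul r₁)).mul (Real.hasDerivAt_sin φ))
      exact h.congr_deriv (by ring)
    have hFd : HasDerivAt F
        (Real.cos φ * (r₁ * φ * Real.sin φ) - Real.sin φ * (r₁ * φ * Real.cos φ)) φ :=
      (hX.const_mul _).sub (hY.const_mul _)
    have hGd : HasDerivAt G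
        (0 - Real.sin φ * (r₁ * φ * Real.sin φ) - Real.cos φ * (r₁ * φ * Real.cos φ)) φ := by
      have h := (((hX.const_mul (Real.sin φ)).const_sub r₁)).sub (hY.const_mul (Real.cos φ))
      exact h.congr_deriv (by ring)
    have hfun : (fun θ => RotP O₁ (-φ) (c₁ θ)) = fun θ => F θ • V 1 0 + G θ • V 0 1 := by
      funext θ; rw [key₁ θ, V_decomp]
    have hD : HasDerivAt (fun θ => RotP O₁ (-φ) (c₁ θ))
        ((Real.cos φ * (r₁ * φ * Real.sin φ) - Real.sin φ * (r₁ * φ * Real.cos φ)) • V 1 0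
          + (0 - Real.sin φ * (r₁ * φ * Real.sin φ) - Real.cos φ * (r₁ * φ * Real.cos φ)) • V 0 1) φ := by
      rw [hfun]
      exact (hFd.smul_const (V 1 0)).add (hGd.smul_const (V 0 1))
    refine ⟨0 - Real.sin φ * (r₁ * φ * Real.sin φ) - Real.cos φ * (r₁ * φ * Real.cos φ), ?_⟩
    rw [hD.deriv]
    have hz : Real.cos φ * (r₁ * φ * Real.sin φ) - Real.sin φ * (r₁ * φ * Real.cos φ) = 0 := by
      ring
    rw [hz, zero_smul, zero_add]
  · -- derivative of gear 2 curve
    have hX : HasDerivAt (fun ψ : ℝ => r₂ * Real.sin ψ - r₂ * ψ * Real.cos ψ)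
        (r₂ * α * Real.sin α) α := by
      have h := ((Real.hasDerivAt_sin α).const_mul r₂).sub
        ((((hasDerivAt_id' (𝕜 := ℝ) (x := α)).const_mul r₂)).mul (Real.hasDerivAt_cos α))
      exact h.congr_deriv (by ring)
    have hY : HasDerivAt (fun ψ : ℝ => r₂ * Real.cos ψ + r₂ * ψ * Real.sin ψ)
        (r₂ * α * Real.cos α) α := by
      have h := ((Real.hasDerivAt_cos α).const_mul r₂).add
        ((((hasDerivAt_id' (𝕜 := ℝ) (x := α)).const_mul r₂)).mul (Real.hasDerivAt_sin α))
      exact h.congr_deriv (by ring)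
    have hFd : HasDerivAt F₂
        (Real.cos α * (r₂ * α * Real.sin α) - Real.sin α * (r₂ * α * Real.cos α)) α :=
      (hX.const_mul _).sub (hY.const_mul _)
    have hGd : HasDerivAt G₂
        (Real.sin α * (r₂ * α * Real.sin α) + Real.cos α * (r₂ * α * Real.cos α)) α := by
      have h := ((hX.const_mul (Real.sin α)).const_add (-r₂)).add (hY.const_mul (Real.cos α))
      exact h
    have hfun : (fun ψ => RotP O₂ α (c₂ ψ)) = fun ψ => F₂ ψ • V 1 0 + G₂ ψ • V 0 1 := by
      funext ψ; rw [key₂ ψ, V_decomp]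
    have hD : HasDerivAt (fun ψ => RotP O₂ α (c₂ ψ))
        ((Real.cos α * (r₂ * α * Real.sin α) - Real.sin α * (r₂ * α * Real.cos α)) • V 1 0
          + (Real.sin α * (r₂ * α * Real.sin α) + Real.cos α * (r₂ * α * Real.cos α)) • V 0 1) α := by
      rw [hfun]
      exact (hFd.smul_const (V 1 0)).add (hGd.smul_const (V 0 1))
    refine ⟨Real.sin α * (r₂ * α * Real.sin α) + Real.cos α * (r₂ * α * Real.cos α), ?_⟩
    rw [hD.deriv]
    have hz : Real.cos α * (r₂ * α * Real.sin α) - Real.sin α * (r₂ * α * Real.cos α) = 0 := by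
      ring
    rw [hz, zero_smul, zero_add]
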